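/- Let H = {(i,j) ∈ {1,...,n}² : i·j ≤ n} be the board under the hyperbola xy = n. Then the maximum discrepancy F(H) is Ω(n) and O(n·(log n)^{1/2}). -/

import Mathlib

/-- The hyperbolic board: lattice points `(i,j)` of the `n × n` grid
(1-indexed) with `i·j ≤ n`. -/
def hypBoard (n : ℕ) : Finset (Fin n × Fin n) :=
  Finset.univ.filter (fun p => ((p.1 : ℕ) + 1) * ((p.2 : ℕ) + 1) ≤ n)

private def sg (b : Bool) : ℤ := if b then 1 else -1

private lemma sg_val (b : Bool) : sg b = 1 ∨ sg b = -1 := by cases b <;> simp [sg]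

private lemma mem_hypBoard {n : ℕ} {p : Fin n × Fin n} :
    p ∈ hypBoard n ↔ ((p.1 : ℕ) + 1) * ((p.2 : ℕ) + 1) ≤ n := by
  simp [hypBoard]

private lemma card_hyp_le (n : ℕ) : ((hypBoard n).card : ℝ) ≤ n * (1 + Real.log n) := by
  have h1 : (hypBoard n).card
      = ∑ i : Fin n, (Finset.univ.filter
          (fun j : Fin n => ((i : ℕ) + 1) * ((j : ℕ) + 1) ≤ n)).card := by
    rw [hypBoard, Finset.card_filter, Fintype.sum_prod_type]
    exact Finset.sum_congr rfl fun i _ => (Finset.card_filter _ _).symm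
  have row : ∀ i : Fin n,
      (Finset.univ.filter (fun j : Fin n => ((i : ℕ) + 1) * ((j : ℕ) + 1) ≤ n)).card
        ≤ n / ((i : ℕ) + 1) := by
    intro i
    have h2 : (Finset.univ.filter
        (fun j : Fin n => ((i : ℕ) + 1) * ((j : ℕ) + 1) ≤ n)).card
        ≤ (Finset.range (n / ((i : ℕ) + 1))).card := by
      refine Finset.card_le_card_of_injOn (fun j => (j : ℕ)) ?_ ?_
      · intro j hj
        simp only [Finset.mem_coe, Finset.mem_filter, Finset.mem_univ, true_and] at hj
        have h3 : (j : ℕ) + 1 ≤ n / ((i : ℕ) + 1) :=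
          (Nat.le_div_iff_mul_le (Nat.succ_pos _)).mpr (by rw [mul_comm]; exact hj)
        simp only [Finset.mem_coe, Finset.mem_range]
        omega
      · intro a _ b _ h
        exact Fin.val_injective h
    simpa using h2
  have h4 : ((hypBoard n).card : ℝ) ≤ ∑ i ∈ Finset.range n, (n : ℝ) / ((i : ℝ) + 1) := by
    rw [h1]
    push_cast
    rw [← Fin.sum_univ_eq_sum_range (fun i => (n : ℝ) / ((i : ℝ) + 1))]
    refine Finset.sum_le_sum fun i _ => ?_
    calc ((Finset.univ.filter
        (fun j : Fin n => ((i : ℕ) + 1) * ((j : ℕ) + 1) ≤ n)).card : ℝ)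
        ≤ ((n / ((i : ℕ) + 1) : ℕ) : ℝ) := by exact_mod_cast row i
      _ ≤ (n : ℝ) / (((i : ℕ) : ℝ) + 1) := by
          have := Nat.cast_div_le (α := ℝ) (m := n) (n := (i : ℕ) + 1)
          push_cast at this ⊢
          convert this using 2
  have h5 : ∑ i ∈ Finset.range n, (n : ℝ) / ((i : ℝ) + 1) = (n : ℝ) * (harmonic n : ℝ) := by
    rw [harmonic]
    push_cast
    rw [Finset.mul_sum]
    exact Finset.sum_congr rfl fun i _ => by rw [div_eq_mul_inv]
  calc ((hypBoard n).card : ℝ) ≤ (n : ℝ) * (harmonic n : ℝ) := by rw [← h5]; exact h4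
    _ ≤ n * (1 + Real.log n) := by
        have := harmonic_le_one_add_log n
        have hn : (0:ℝ) ≤ n := Nat.cast_nonneg n
        nlinarith [harmonic_pos (n := n), this]

private lemma mgf (n : ℕ) (x y : Fin n → ℤ) (hx : ∀ i, x i = 1 ∨ x i = -1)
    (hy : ∀ j, y j = 1 ∨ y j = -1) (t : ℝ) :
    ∑ f : (Fin n × Fin n) → Bool,
        Real.exp (t * ((∑ p ∈ hypBoard n, sg (f p) * x p.1 * y p.2 : ℤ) : ℝ))
      ≤ 2 ^ (n * n) * Real.exp ((hypBoard n).card * (t ^ 2 / 2)) := by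
  set H := hypBoard n with hH
  set g : (Fin n × Fin n) → Bool → ℝ := fun p b =>
    if p ∈ H then Real.exp (t * ((sg b * x p.1 * y p.2 : ℤ) : ℝ)) else 1 with hg
  have step1 : ∀ f : (Fin n × Fin n) → Bool,
      Real.exp (t * ((∑ p ∈ H, sg (f p) * x p.1 * y p.2 : ℤ) : ℝ))
        = ∏ p : Fin n × Fin n, g p (f p) := by
    intro f
    have e1 : t * ((∑ p ∈ H, sg (f p) * x p.1 * y p.2 : ℤ) : ℝ)
        = ∑ p ∈ H, t * ((sg (f p) * x p.1 * y p.2 : ℤ) : ℝ) := by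
      push_cast
      rw [Finset.mul_sum]
    rw [e1, Real.exp_sum]
    symm
    calc ∏ p : Fin n × Fin n, g p (f p)
        = ∏ p ∈ H, g p (f p) :=
          (Finset.prod_subset (Finset.subset_univ H) (fun p _ hp => if_neg hp)).symm
      _ = ∏ p ∈ H, Real.exp (t * ((sg (f p) * x p.1 * y p.2 : ℤ) : ℝ)) :=
          Finset.prod_congr rfl fun p hp => if_pos hp
  have step2 : ∑ f : (Fin n × Fin n) → Bool, ∏ p : Fin n × Fin n, g p (f p)
      = ∏ p : Fin n × Fin n, ∑ b : Bool, g p b := by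
    rw [Finset.prod_univ_sum]
    rw [Fintype.piFinset_univ]
  have step3 : ∀ p : Fin n × Fin n,
      ∑ b : Bool, g p b ≤ if p ∈ H then 2 * Real.exp (t ^ 2 / 2) else 2 := by
    intro p
    by_cases hp : p ∈ H
    · simp only [Fintype.sum_bool, hg, hp, if_pos]
      have hsgt : (sg true : ℝ) = 1 := by norm_num [sg]
      have hsgf : (sg false : ℝ) = -1 := by norm_num [sg]
      set u : ℝ := ((x p.1 * y p.2 : ℤ) : ℝ) with hu
      have hu2 : u ^ 2 = 1 := by
        rcases hx p.1 with h1 | h1 <;> rcases hy p.2 with h2 | h2 <;>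
          rw [hu, h1, h2] <;> norm_num
      have e2 : ((sg true * x p.1 * y p.2 : ℤ) : ℝ) = u := by
        rw [show sg true = 1 from rfl, one_mul, hu]
      have e3 : ((sg false * x p.1 * y p.2 : ℤ) : ℝ) = -u := by
        rw [show sg false = -1 from rfl, hu]; push_cast; ring
      rw [e2, e3]
      have : Real.exp (t * u) + Real.exp (t * -u) = 2 * Real.cosh (t * u) := by
        rw [Real.cosh_eq]; ring_nf
      rw [this]
      have := Real.cosh_le_exp_half_sq (t * u)
      have e4 : (t * u) ^ 2 / 2 = t ^ 2 / 2 := by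
        rw [mul_pow, hu2, mul_one]
      rw [e4] at this
      linarith
    · simp only [Fintype.sum_bool, hg, hp, if_neg]
      norm_num
  calc ∑ f : (Fin n × Fin n) → Bool,
        Real.exp (t * ((∑ p ∈ H, sg (f p) * x p.1 * y p.2 : ℤ) : ℝ))
      = ∏ p : Fin n × Fin n, ∑ b : Bool, g p b := by
        rw [← step2]; exact Finset.sum_congr rfl fun f _ => step1 f
    _ ≤ ∏ p : Fin n × Fin n, (if p ∈ H then 2 * Real.exp (t ^ 2 / 2) else 2) := by
        refine Finset.prod_le_prod (fun p _ => ?_) (fun p _ => step3 p)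
        refine Finset.sum_nonneg fun b _ => ?_
        rw [show g p b = if p ∈ H then Real.exp (t * ((sg b * x p.1 * y p.2 : ℤ) : ℝ)) else 1 from rfl]
        split_ifs <;> positivity
    _ = 2 ^ (n * n) * Real.exp ((hypBoard n).card * (t ^ 2 / 2)) := by
        have e5 : ∀ p : Fin n × Fin n,
            (if p ∈ H then 2 * Real.exp (t ^ 2 / 2) else 2)
              = 2 * (if p ∈ H then Real.exp (t ^ 2 / 2) else 1) := by
          intro p; split_ifs <;> ring
        simp only [e5]
        rw [Finset.prod_mul_distrib, Finset.prod_const]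
        have e6 : ∏ p : Fin n × Fin n, (if p ∈ H then Real.exp (t ^ 2 / 2) else 1)
            = ∏ p ∈ H, Real.exp (t ^ 2 / 2) := by
          refine (Finset.prod_subset (Finset.subset_univ H) ?_).symm.trans
            (Finset.prod_congr rfl fun p hp => by simp [hp])
          intro p _ hp; simp [hp]
        rw [e6, Finset.prod_const, ← Real.exp_nat_mul]
        simp [Finset.card_univ, hH]

private lemma upper (n : ℕ) (hn : 3 ≤ n) :
    ∃ a : Fin n × Fin n → ℤ, (∀ p ∈ hypBoard n, a p = 1 ∨ a p = -1) ∧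
      ∀ x y : Fin n → ℤ,
        (∀ i, x i = 1 ∨ x i = -1) → (∀ j, y j = 1 ∨ y j = -1) →
        ((∑ p ∈ hypBoard n, a p * x p.1 * y p.2 : ℤ) : ℝ)
          ≤ 4 * (n : ℝ) * Real.sqrt (Real.log n) := by
  classical
  have hn0 : (0:ℝ) < n := by exact_mod_cast Nat.lt_of_lt_of_le (by norm_num) hn
  have hlog1 : (1:ℝ) ≤ Real.log n := by
    rw [Real.le_log_iff_exp_le hn0]
    calc Real.exp 1 ≤ 2.7182818286 := Real.exp_one_lt_d9.le
      _ ≤ 3 := by norm_num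
      _ ≤ (n:ℝ) := by exact_mod_cast hn
  have hlogpos : (0:ℝ) < Real.log n := lt_of_lt_of_le one_pos hlog1
  set m : ℕ := (hypBoard n).card with hm
  set M : ℝ := 2 * n * Real.log n with hM
  have hMpos : (0:ℝ) < M := by rw [hM]; positivity
  have hmM : (m : ℝ) ≤ M := by
    calc (m : ℝ) ≤ n * (1 + Real.log n) := card_hyp_le n
      _ ≤ M := by rw [hM]; nlinarith
  set lam : ℝ := 4 * n * Real.sqrt (Real.log n) with hlam
  have hlampos : (0:ℝ) < lam := by
    rw [hlam]; positivity
  set t : ℝ := lam / M with ht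
  have htpos : (0:ℝ) < t := div_pos hlampos hMpos
  have hlamsq : lam ^ 2 = 16 * (n:ℝ) ^ 2 * Real.log n := by
    rw [hlam, mul_pow, mul_pow, Real.sq_sqrt hlogpos.le]; ring
  have hexp : (m:ℝ) * (t ^ 2 / 2) - t * lam ≤ -(4 * n) := by
    have h1 : (m:ℝ) * (t ^ 2 / 2) ≤ M * (t ^ 2 / 2) := by nlinarith [sq_nonneg t]
    have h2 : M * (t ^ 2 / 2) - t * lam = -(lam ^ 2 / (2 * M)) := by
      rw [ht]; field_simp; ring
    have h3 : lam ^ 2 / (2 * M) = 4 * n := by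
      rw [hlamsq, hM]; field_simp; ring
    linarith
  -- tail bound for a fixed pair of sign vectors
  have tail : ∀ xy : (Fin n → Bool) × (Fin n → Bool),
      ((Finset.univ.filter (fun f : (Fin n × Fin n) → Bool =>
          lam < ((∑ p ∈ hypBoard n, sg (f p) * sg (xy.1 p.1) * sg (xy.2 p.2) : ℤ) : ℝ))).card : ℝ)
        ≤ 2 ^ (n * n) * Real.exp (-(4 * n)) := by
    intro xy
    set x : Fin n → ℤ := fun i => sg (xy.1 i) with hxdef
    set y : Fin n → ℤ := fun j => sg (xy.2 j) with hydef
    have hx : ∀ i, x i = 1 ∨ x i = -1 := fun i => sg_val _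
    have hy : ∀ j, y j = 1 ∨ y j = -1 := fun j => sg_val _
    set Bad : Finset ((Fin n × Fin n) → Bool) := Finset.univ.filter (fun f =>
      lam < ((∑ p ∈ hypBoard n, sg (f p) * sg (xy.1 p.1) * sg (xy.2 p.2) : ℤ) : ℝ)) with hBad
    have hsum : ∀ f : (Fin n × Fin n) → Bool,
        (∑ p ∈ hypBoard n, sg (f p) * sg (xy.1 p.1) * sg (xy.2 p.2) : ℤ)
          = ∑ p ∈ hypBoard n, sg (f p) * x p.1 * y p.2 := by
      intro f; rfl
    have h4 : (Bad.card : ℝ) * Real.exp (t * lam)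
        ≤ ∑ f : (Fin n × Fin n) → Bool,
            Real.exp (t * ((∑ p ∈ hypBoard n, sg (f p) * x p.1 * y p.2 : ℤ) : ℝ)) := by
      calc (Bad.card : ℝ) * Real.exp (t * lam)
          = ∑ _f ∈ Bad, Real.exp (t * lam) := by
            rw [Finset.sum_const, nsmul_eq_mul]
        _ ≤ ∑ f ∈ Bad, Real.exp (t * ((∑ p ∈ hypBoard n, sg (f p) * x p.1 * y p.2 : ℤ) : ℝ)) := by
            refine Finset.sum_le_sum fun f hf => Real.exp_le_exp.mpr ?_
            have hlt := (Finset.mem_filter.mp hf).2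
            rw [hsum f] at hlt
            exact mul_le_mul_of_nonneg_left hlt.le htpos.le
        _ ≤ _ := Finset.sum_le_sum_of_subset_of_nonneg (Finset.filter_subset _ _)
            (fun _ _ _ => (Real.exp_pos _).le)
    have h5 := (h4.trans (mgf n x y hx hy t))
    have h6 : (Bad.card : ℝ) ≤ 2 ^ (n * n) * Real.exp ((m:ℝ) * (t ^ 2 / 2) - t * lam) := by
      rw [Real.exp_sub, ← mul_div_assoc, le_div_iff₀ (Real.exp_pos _)]
      exact h5
    refine h6.trans ?_
    have := Real.exp_le_exp.mpr hexp
    nlinarith [pow_pos (show (0:ℝ) < 2 by norm_num) (n * n), Real.exp_pos (-(4*(n:ℝ)))]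
  -- union bound
  set TotalBad : Finset ((Fin n × Fin n) → Bool) := Finset.univ.filter (fun f =>
    ∃ xy : (Fin n → Bool) × (Fin n → Bool),
      lam < ((∑ p ∈ hypBoard n, sg (f p) * sg (xy.1 p.1) * sg (xy.2 p.2) : ℤ) : ℝ)) with hTB
  have hsub : TotalBad ⊆ Finset.univ.biUnion
      (fun xy : (Fin n → Bool) × (Fin n → Bool) =>
        Finset.univ.filter (fun f : (Fin n × Fin n) → Bool =>
          lam < ((∑ p ∈ hypBoard n, sg (f p) * sg (xy.1 p.1) * sg (xy.2 p.2) : ℤ) : ℝ))) := by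
    intro f hf
    obtain ⟨xy, hxy⟩ := (Finset.mem_filter.mp hf).2
    exact Finset.mem_biUnion.mpr ⟨xy, Finset.mem_univ _,
      Finset.mem_filter.mpr ⟨Finset.mem_univ _, hxy⟩⟩
  have hTBcard : (TotalBad.card : ℝ) < 2 ^ (n * n) := by
    have h7 : (TotalBad.card : ℝ)
        ≤ ∑ xy : (Fin n → Bool) × (Fin n → Bool),
            ((Finset.univ.filter (fun f : (Fin n × Fin n) → Bool =>
              lam < ((∑ p ∈ hypBoard n, sg (f p) * sg (xy.1 p.1) * sg (xy.2 p.2) : ℤ) : ℝ))).card : ℝ) := by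
      have := (Finset.card_le_card hsub).trans Finset.card_biUnion_le
      exact_mod_cast this
    have h8 : (TotalBad.card : ℝ)
        ≤ (Fintype.card ((Fin n → Bool) × (Fin n → Bool)) : ℝ)
            * (2 ^ (n * n) * Real.exp (-(4 * n))) := by
      refine h7.trans ?_
      rw [← Finset.card_univ, ← nsmul_eq_mul]
      exact Finset.sum_le_card_nsmul _ _ _ fun xy _ => tail xy
    have h9 : (Fintype.card ((Fin n → Bool) × (Fin n → Bool)) : ℝ)
        = (2:ℝ) ^ n * 2 ^ n := by
      simp [Fintype.card_prod, Fintype.card_fun]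
    have h10 : (2:ℝ) ^ n * 2 ^ n * Real.exp (-(4 * n)) < 1 := by
      have e1 : (2:ℝ) ^ n * 2 ^ n = Real.exp (n * Real.log 4) := by
        rw [← Real.exp_log (show (0:ℝ) < 2 ^ n * 2 ^ n by positivity)]
        congr 1
        rw [show (2:ℝ) ^ n * 2 ^ n = 4 ^ n by rw [← mul_pow]; norm_num,
          Real.log_pow]
      rw [e1, ← Real.exp_add, show (1:ℝ) = Real.exp 0 by rw [Real.exp_zero]]
      rw [Real.exp_lt_exp]
      have hl4 : Real.log 4 ≤ 3 := by
        have := Real.log_le_sub_one_of_pos (show (0:ℝ) < 4 by norm_num)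
        linarith
      have hn3 : (3:ℝ) ≤ n := by exact_mod_cast hn
      nlinarith
    calc (TotalBad.card : ℝ)
        ≤ (2:ℝ) ^ n * 2 ^ n * Real.exp (-(4 * n)) * 2 ^ (n * n) := by
          rw [h9] at h8; linarith [h8]
      _ < 1 * 2 ^ (n * n) := by
          have : (0:ℝ) < (2:ℝ) ^ (n * n) := by positivity
          nlinarith
      _ = 2 ^ (n * n) := one_mul _
  -- pick a good coloring
  have hex : ∃ f : (Fin n × Fin n) → Bool, f ∉ TotalBad := by
    by_contra hcon
    push_neg at hcon
    have : (Finset.univ : Finset ((Fin n × Fin n) → Bool)) ⊆ TotalBad :=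
      fun f _ => hcon f
    have hcards : (2:ℕ) ^ (n * n) ≤ TotalBad.card := by
      calc (2:ℕ) ^ (n * n) = Fintype.card ((Fin n × Fin n) → Bool) := by
            simp [Fintype.card_fun]
        _ = (Finset.univ : Finset ((Fin n × Fin n) → Bool)).card :=
            Finset.card_univ.symm
        _ ≤ TotalBad.card := Finset.card_le_card this
      
    have : ((2:ℕ) ^ (n * n) : ℝ) ≤ (TotalBad.card : ℝ) := by exact_mod_cast hcards
    push_cast at this
    linarith
  obtain ⟨f, hf⟩ := hex
  refine ⟨fun p => sg (f p), fun p _ => sg_val _, fun x y hx hy => ?_⟩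
  set xb : Fin n → Bool := fun i => decide (x i = 1) with hxb
  set yb : Fin n → Bool := fun j => decide (y j = 1) with hyb
  have hxv : ∀ i, sg (xb i) = x i := by
    intro i
    rcases hx i with h | h <;> simp [hxb, h, sg]
  have hyv : ∀ j, sg (yb j) = y j := by
    intro j
    rcases hy j with h | h <;> simp [hyb, h, sg]
  have hnot : ¬ lam < ((∑ p ∈ hypBoard n, sg (f p) * sg (xb p.1) * sg (yb p.2) : ℤ) : ℝ) := by
    intro hlt
    exact hf (Finset.mem_filter.mpr ⟨Finset.mem_univ _, ⟨(xb, yb), hlt⟩⟩)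
  push_neg at hnot
  have heq : (∑ p ∈ hypBoard n, sg (f p) * sg (xb p.1) * sg (yb p.2) : ℤ)
      = ∑ p ∈ hypBoard n, sg (f p) * x p.1 * y p.2 :=
    Finset.sum_congr rfl fun p _ => by rw [hxv, hyv]
  rw [heq] at hnot
  calc ((∑ p ∈ hypBoard n, sg (f p) * x p.1 * y p.2 : ℤ) : ℝ) ≤ lam := hnot
    _ = 4 * (n : ℝ) * Real.sqrt (Real.log n) := hlam

private lemma lower (n : ℕ) (a : Fin n × Fin n → ℤ) (ha : ∀ p ∈ hypBoard n, a p = 1 ∨ a p = -1) :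
    ∃ x y : Fin n → ℤ,
      (∀ i, x i = 1 ∨ x i = -1) ∧ (∀ j, y j = 1 ∨ y j = -1) ∧
      (1 : ℝ) * (n : ℝ) ≤ ((∑ p ∈ hypBoard n, a p * x p.1 * y p.2 : ℤ) : ℝ) := by
  rcases Nat.eq_zero_or_pos n with hn | hn
  · subst hn
    refine ⟨fun i => 1, fun j => 1, fun i => i.elim0, fun j => j.elim0, ?_⟩
    simp [hypBoard]
  set i0 : Fin n := ⟨0, hn⟩ with hi0
  set y : Fin n → ℤ := fun j => a (i0, j) with hy
  have hyval : ∀ j, y j = 1 ∨ y j = -1 := by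
    intro j
    refine ha _ ?_
    rw [mem_hypBoard]
    have hj : (j : ℕ) < n := j.isLt
    show (0 + 1) * ((j : ℕ) + 1) ≤ n
    omega
  set R : Fin n → ℤ := fun i =>
    ∑ j : Fin n, if ((i : ℕ) + 1) * ((j : ℕ) + 1) ≤ n then a (i, j) * y j else 0 with hR
  set x : Fin n → ℤ := fun i => if 0 ≤ R i then 1 else -1 with hx
  have hxval : ∀ i, x i = 1 ∨ x i = -1 := by
    intro i; by_cases h : 0 ≤ R i <;> simp [hx, h]
  refine ⟨x, y, hxval, hyval, ?_⟩
  have hS : (∑ p ∈ hypBoard n, a p * x p.1 * y p.2) = ∑ i : Fin n, x i * R i := by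
    rw [hypBoard, Finset.sum_filter, Fintype.sum_prod_type]
    refine Finset.sum_congr rfl fun i _ => ?_
    rw [hR, Finset.mul_sum]
    refine Finset.sum_congr rfl fun j _ => ?_
    by_cases h : ((i : ℕ) + 1) * ((j : ℕ) + 1) ≤ n <;> simp [h] <;> ring
  have habs : ∀ i : Fin n, x i * R i = |R i| := by
    intro i
    by_cases h : 0 ≤ R i
    · simp [hx, h, abs_of_nonneg h]
    · push_neg at h
      simp [hx, not_le.mpr h, abs_of_neg h]
  have hR0 : R i0 = n := by
    rw [hR]
    have : ∀ j : Fin n, (if ((i0 : ℕ) + 1) * ((j : ℕ) + 1) ≤ n then a (i0, j) * y j else 0) = 1 := by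
      intro j
      have hj : (j : ℕ) < n := j.isLt
      have hc : ((i0 : ℕ) + 1) * ((j : ℕ) + 1) ≤ n := by
        show (0 + 1) * ((j : ℕ) + 1) ≤ n; omega
      rw [if_pos hc]
      have hyj : y j = a (i0, j) := rfl
      rw [hyj]
      rcases ha (i0, j) (mem_hypBoard.mpr hc) with h | h <;> rw [h] <;> norm_num
    simp only [this]
    simp
  have hge : (n : ℤ) ≤ ∑ i : Fin n, x i * R i := by
    calc (n : ℤ) = R i0 := hR0.symm
      _ ≤ |R i0| := le_abs_self _
      _ = x i0 * R i0 := (habs i0).symm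
      _ ≤ ∑ i : Fin n, x i * R i := by
          refine Finset.single_le_sum (f := fun i => x i * R i) (fun i _ => ?_) (Finset.mem_univ i0)
          show 0 ≤ x i * R i
          rw [habs i]; exact abs_nonneg _
  rw [hS, one_mul]
  exact_mod_cast hge


theorem stmt_17 :
    (∃ c : ℝ, 0 < c ∧ ∀ n : ℕ,
      ∀ a : Fin n × Fin n → ℤ, (∀ p ∈ hypBoard n, a p = 1 ∨ a p = -1) →
        ∃ x y : Fin n → ℤ,
          (∀ i, x i = 1 ∨ x i = -1) ∧ (∀ j, y j = 1 ∨ y j = -1) ∧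
          c * (n : ℝ) ≤ ((∑ p ∈ hypBoard n, a p * x p.1 * y p.2 : ℤ) : ℝ)) ∧
    (∃ C : ℝ, 0 < C ∧ ∃ N : ℕ, ∀ n : ℕ, N ≤ n →
      ∃ a : Fin n × Fin n → ℤ, (∀ p ∈ hypBoard n, a p = 1 ∨ a p = -1) ∧
        ∀ x y : Fin n → ℤ,
          (∀ i, x i = 1 ∨ x i = -1) → (∀ j, y j = 1 ∨ y j = -1) →
          ((∑ p ∈ hypBoard n, a p * x p.1 * y p.2 : ℤ) : ℝ)
            ≤ C * (n : ℝ) * Real.sqrt (Real.log n)) := by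
  constructor
  · exact ⟨1, one_pos, fun n a ha => lower n a ha⟩
  · exact ⟨4, by norm_num, 3, fun n hn => upper n hn⟩
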